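/- Let a : Fin n → ℝ^d be a point configuration and let [X1,Y1], [X2,Y2] be fine tiles (i.e. the family (a i)_{i ∈ Y1 \ X1} is affinely independent and the family (a i)_{i ∈ Y2 \ X2} is affinely independent). If the tiles [X1,Y1] and [X2,Y2] are separated, then for every B1 with X1 ⊆ B1 ⊆ Y1 and every B2 with X2 ⊆ B2 ⊆ Y2, the subsets B1 and B2 are separated points. -/

import Mathlib

/-- The tiles `[X1,Y1]` and `[X2,Y2]` are separated with respect to `a`:
there is an affine functional positive on `(X1 \ X2) ∪ (Y1 \ Y2)`, negative on
`(X2 \ X1) ∪ (Y2 \ Y1)` and zero on `(Y1 ∩ Y2) \ (X1 ∪ X2)`. -/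
def SeparatedTiles {n d : ℕ} (a : Fin n → (Fin d → ℝ))
    (X1 Y1 X2 Y2 : Finset (Fin n)) : Prop :=
  ∃ f : (Fin d → ℝ) →ᵃ[ℝ] ℝ,
    (∀ i ∈ (X1 \ X2) ∪ (Y1 \ Y2), 0 < f (a i)) ∧
    (∀ i ∈ (X2 \ X1) ∪ (Y2 \ Y1), f (a i) < 0) ∧
    (∀ i ∈ (Y1 ∩ Y2) \ (X1 ∪ X2), f (a i) = 0)

/-- `B1` and `B2` are separated points with respect to `a`. -/
def SeparatedPoints {n d : ℕ} (a : Fin n → (Fin d → ℝ))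
    (B1 B2 : Finset (Fin n)) : Prop :=
  ∃ f : (Fin d → ℝ) →ᵃ[ℝ] ℝ,
    (∀ i ∈ B1 \ B2, 0 < f (a i)) ∧ (∀ i ∈ B2 \ B1, f (a i) < 0)

/-- The tile `[X,Y]` is fine: the points indexed by `Y \ X` are affinely independent. -/
def FineTile {n d : ℕ} (a : Fin n → (Fin d → ℝ)) (X Y : Finset (Fin n)) : Prop :=
  AffineIndependent ℝ (fun i : {x // x ∈ Y \ X} => a i)

open Filter Topology

lemma exists_linearMap_eq {ι : Type*} {V : Type*} [AddCommGroup V] [Module ℝ V]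
    {v : ι → V} (hv : LinearIndependent ℝ v) (w : ι → ℝ) :
    ∃ L : V →ₗ[ℝ] ℝ, ∀ i, L (v i) = w i := by
  let b := Module.Basis.span hv
  obtain ⟨L, hL⟩ := (b.constr ℝ w).exists_extend
  refine ⟨L, fun i => ?_⟩
  have hb : ((b i : Submodule.span ℝ (Set.range v)) : V) = v i := congrArg Subtype.val (Module.Basis.span_apply hv i)
  have := congrArg (fun M : Submodule.span ℝ (Set.range v) →ₗ[ℝ] ℝ => M (b i)) hL
  simpa [hb, Module.Basis.constr_basis] using this

lemma exists_affineMap_eq {d : ℕ} {ι : Type*} {p : ι → (Fin d → ℝ)}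
    (hp : AffineIndependent ℝ p) (c : ι → ℝ) :
    ∃ g : (Fin d → ℝ) →ᵃ[ℝ] ℝ, ∀ i, g (p i) = c i := by
  cases isEmpty_or_nonempty ι with
  | inl h => exact ⟨AffineMap.const ℝ _ 0, fun i => (h.false i).elim⟩
  | inr h =>
    obtain ⟨i0⟩ := h
    have hv := (affineIndependent_iff_linearIndependent_vsub ℝ p i0).mp hp
    obtain ⟨L, hL⟩ := exists_linearMap_eq hv (fun i : {x // x ≠ i0} => c i - c i0)
    refine ⟨⟨fun x => L (x - p i0) + c i0, L, fun v x => by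
      simp [vadd_eq_add, add_sub_assoc, map_add]; ring⟩, fun i => ?_⟩
    by_cases hi : i = i0
    · subst hi; simp
    · have := hL ⟨i, hi⟩
      simp only [vsub_eq_sub] at this
      rw [map_sub] at this
      simp only [AffineMap.coe_mk, map_sub]
      linarith

theorem pointwise_separated_of_separated_fine {n d : ℕ} (a : Fin n → (Fin d → ℝ))
    (X1 Y1 X2 Y2 : Finset (Fin n)) (h1 : X1 ⊆ Y1) (h2 : X2 ⊆ Y2)
    (hf1 : FineTile a X1 Y1) (hf2 : FineTile a X2 Y2)
    (hsep : SeparatedTiles a X1 Y1 X2 Y2)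
    (B1 B2 : Finset (Fin n)) (hB1l : X1 ⊆ B1) (hB1r : B1 ⊆ Y1)
    (hB2l : X2 ⊆ B2) (hB2r : B2 ⊆ Y2) :
    SeparatedPoints a B1 B2 := by
  obtain ⟨f, hpos, hneg, hzero⟩ := hsep
  set Z : Finset (Fin n) := (Y1 ∩ Y2) \ (X1 ∪ X2) with hZdef
  have hZsub : ∀ i ∈ Z, i ∈ Y1 \ X1 := by
    intro i hi
    simp only [hZdef, Finset.mem_sdiff, Finset.mem_inter, Finset.mem_union] at hi
    simp only [Finset.mem_sdiff]
    exact ⟨hi.1.1, fun h => hi.2 (Or.inl h)⟩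
  have hind : AffineIndependent ℝ (fun i : {x // x ∈ Z} => a i) := by
    refine AffineIndependent.comp_embedding
      ⟨fun i : {x // x ∈ Z} => (⟨i.1, hZsub i.1 i.2⟩ : {x // x ∈ Y1 \ X1}), ?_⟩ hf1
    intro i j hij
    cases i; cases j; simpa using hij
  obtain ⟨g, hg⟩ := exists_affineMap_eq hind
    (fun i : {x // x ∈ Z} => if (i : Fin n) ∈ B1 then (1 : ℝ) else -1)
  have key1 : ∀ i ∈ B1 \ B2, 0 < f (a i) ∨ (f (a i) = 0 ∧ g (a i) = 1) := by
    intro i hi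
    rw [Finset.mem_sdiff] at hi
    obtain ⟨hiB1, hiB2⟩ := hi
    by_cases hx1 : i ∈ X1
    · left
      exact hpos i (Finset.mem_union_left _ (Finset.mem_sdiff.2
        ⟨hx1, fun h => hiB2 (hB2l h)⟩))
    · by_cases hy2 : i ∈ Y2
      · right
        have hiZ : i ∈ Z := by
          simp only [hZdef, Finset.mem_sdiff, Finset.mem_inter, Finset.mem_union]
          exact ⟨⟨hB1r hiB1, hy2⟩, fun h => h.elim hx1 (fun h' => hiB2 (hB2l h'))⟩
        refine ⟨hzero i hiZ, ?_⟩
        have := hg ⟨i, hiZ⟩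
        rwa [if_pos hiB1] at this
      · left
        exact hpos i (Finset.mem_union_right _ (Finset.mem_sdiff.2 ⟨hB1r hiB1, hy2⟩))
  have key2 : ∀ i ∈ B2 \ B1, f (a i) < 0 ∨ (f (a i) = 0 ∧ g (a i) = -1) := by
    intro i hi
    rw [Finset.mem_sdiff] at hi
    obtain ⟨hiB2, hiB1⟩ := hi
    by_cases hx2 : i ∈ X2
    · left
      exact hneg i (Finset.mem_union_left _ (Finset.mem_sdiff.2
        ⟨hx2, fun h => hiB1 (hB1l h)⟩))
    · by_cases hy1 : i ∈ Y1
      · right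
        have hiZ : i ∈ Z := by
          simp only [hZdef, Finset.mem_sdiff, Finset.mem_inter, Finset.mem_union]
          exact ⟨⟨hy1, hB2r hiB2⟩, fun h => h.elim (fun h' => hiB1 (hB1l h')) hx2⟩
        refine ⟨hzero i hiZ, ?_⟩
        have := hg ⟨i, hiZ⟩
        rwa [if_neg hiB1] at this
      · left
        exact hneg i (Finset.mem_union_right _ (Finset.mem_sdiff.2 ⟨hB2r hiB2, hy1⟩))
  have hev : ∀ᶠ ε in 𝓝[>] (0 : ℝ),
      (∀ i ∈ B1 \ B2, 0 < f (a i) + ε * g (a i)) ∧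
      (∀ i ∈ B2 \ B1, f (a i) + ε * g (a i) < 0) := by
    refine Filter.Eventually.and ?_ ?_
    · rw [Filter.eventually_all_finset]
      intro i hi
      rcases key1 i hi with h | ⟨h0, h1⟩
      · have ht : Tendsto (fun ε : ℝ => f (a i) + ε * g (a i)) (𝓝[>] 0) (𝓝 (f (a i))) := by
          have : Tendsto (fun ε : ℝ => f (a i) + ε * g (a i)) (𝓝 0) (𝓝 (f (a i) + 0 * g (a i))) :=
            (continuous_const.add (continuous_id.mul continuous_const)).tendsto 0
          simpa using this.mono_left nhdsWithin_le_nhds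
        exact ht.eventually (eventually_gt_nhds h)
      · filter_upwards [self_mem_nhdsWithin] with ε hε
        rw [h0, h1]
        simpa using hε
    · rw [Filter.eventually_all_finset]
      intro i hi
      rcases key2 i hi with h | ⟨h0, h1⟩
      · have ht : Tendsto (fun ε : ℝ => f (a i) + ε * g (a i)) (𝓝[>] 0) (𝓝 (f (a i))) := by
          have : Tendsto (fun ε : ℝ => f (a i) + ε * g (a i)) (𝓝 0) (𝓝 (f (a i) + 0 * g (a i))) :=
            (continuous_const.add (continuous_id.mul continuous_const)).tendsto 0
          simpa using this.mono_left nhdsWithin_le_nhds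
        exact ht.eventually (eventually_lt_nhds h)
      · filter_upwards [self_mem_nhdsWithin] with ε hε
        rw [h0, h1]
        have : (0:ℝ) < ε := hε
        simp only [zero_add, mul_neg_one]
        linarith
  obtain ⟨ε, hε1, hε2⟩ := hev.exists
  refine ⟨f + ε • g, fun i hi => ?_, fun i hi => ?_⟩
  · simpa [AffineMap.coe_add, AffineMap.coe_smul, Pi.add_apply, Pi.smul_apply, smul_eq_mul] using hε1 i hi
  · simpa [AffineMap.coe_add, AffineMap.coe_smul, Pi.add_apply, Pi.smul_apply, smul_eq_mul] using hε2 i hi
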